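/- Per-cycle descent of BPRS under relative smoothness: Let f and g be convex differentiable functions that are L-relatively smooth with respect to a Legendre function h, i.e., f(x) ≤ f(y) + ⟨∇f(y), x − y⟩ + L·D_h(x,y) and g(x) ≤ g(y) + ⟨∇g(y), x − y⟩ + L·D_h(x,y) for all x, y, let F = f + g, and let 0 < γ ≤ 1/L. If y^k := argmin_y { f(x^k) + ⟨∇f(x^k), y − x^k⟩ + g(y) + (1/γ) D_h(y, x^k) } and x^{k+1} := argmin_x { g(y^k) + ⟨∇g(y^k), x − y^k⟩ + f(x) + (1/γ) D_h(x, y^k) }, then F(y^k) ≤ F(x^k) − (1/γ) D_h(x^k, y^k), F(x^{k+1}) ≤ F(y^k) − (1/γ) D_h(y^k, x^{k+1}), and hence F(x^{k+1}) ≤ F(x^k) − (1/γ) D_h(x^k, y^k) − (1/γ) D_h(y^k, x^{k+1}). -/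

import Mathlib

open Finset

/-- Linear functional `y ↦ ∑ i, c i * y i` as a CLM. -/
noncomputable def linCLM (n : ℕ) (c : Fin n → ℝ) : (Fin n → ℝ) →L[ℝ] ℝ :=
  ∑ i, c i • (ContinuousLinearMap.proj i : (Fin n → ℝ) →L[ℝ] ℝ)

lemma linCLM_apply (n : ℕ) (c q : Fin n → ℝ) : linCLM n c q = ∑ i, c i * q i := by
  simp [linCLM, ContinuousLinearMap.sum_apply]

/-- Gradient inequality for convex differentiable functions. -/
lemma grad_ineq {n : ℕ} {φ : (Fin n → ℝ) → ℝ} (hc : ConvexOn ℝ Set.univ φ)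
    (hd : Differentiable ℝ φ) (x y : Fin n → ℝ) :
    φ x + fderiv ℝ φ x (y - x) ≤ φ y := by
  set c : ℝ → (Fin n → ℝ) := fun t => t • (y - x) + x with hc_def
  have hcder : ∀ t : ℝ, HasDerivAt c (y - x) t := fun t => by
    simpa [hc_def] using ((hasDerivAt_id t).smul_const (y - x)).add_const x
  have hq : ∀ t : ℝ, HasDerivAt (φ ∘ c) (fderiv ℝ φ (c t) (y - x)) t := fun t =>
    (hd (c t)).hasFDerivAt.comp_hasDerivAt t (hcder t)
  have hcv : ConvexOn ℝ Set.univ (φ ∘ c) := by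
    have := hc.comp_affineMap (AffineMap.lineMap x y : ℝ →ᵃ[ℝ] (Fin n → ℝ))
    have hce : c = ⇑(AffineMap.lineMap x y : ℝ →ᵃ[ℝ] (Fin n → ℝ)) := by
      funext t
      simp [hc_def, AffineMap.lineMap_apply, vsub_eq_sub, vadd_eq_add]
    rw [hce]
    simpa only [Set.preimage_univ] using this
  have hslope := hcv.deriv_le_slope (Set.mem_univ 0) (Set.mem_univ 1) zero_lt_one
    ((hq 0).differentiableAt)
  rw [(hq 0).deriv] at hslope
  have hc0 : c 0 = x := by simp [hc_def]
  have hc1 : c 1 = y := by simp [hc_def]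
  have : slope (φ ∘ c) 0 1 = φ y - φ x := by
    simp [slope_def_field, hc0, hc1, Function.comp]
  rw [this, hc0] at hslope
  linarith

lemma bprs_step (n : ℕ) (h : (Fin n → ℝ) → ℝ) (gh : (Fin n → ℝ) → (Fin n → ℝ))
    (hconv : ConvexOn ℝ Set.univ h) (hdiffh : Differentiable ℝ h)
    (hgradh : ∀ p q, (fderiv ℝ h p) q = ∑ i, gh p i * q i)
    (D : (Fin n → ℝ) → (Fin n → ℝ) → ℝ)
    (hD : ∀ p q, D p q = h p - h q - ∑ i, gh q i * (p i - q i))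
    (f g : (Fin n → ℝ) → ℝ) (gf gg : (Fin n → ℝ) → (Fin n → ℝ))
    (hgconv : ConvexOn ℝ Set.univ g) (hgd : Differentiable ℝ g)
    (hggrad : ∀ p q, (fderiv ℝ g p) q = ∑ i, gg p i * q i)
    (L γ : ℝ) (hγ0 : 0 < γ) (hLγ : L ≤ 1/γ)
    (hfsmooth : ∀ a b, f a ≤ f b + (∑ i, gf b i * (a i - b i)) + L * D a b)
    (x y : Fin n → ℝ)
    (hmin : ∀ y', f x + (∑ i, gf x i * (y i - x i)) + g y + (1/γ) * D y x
        ≤ f x + (∑ i, gf x i * (y' i - x i)) + g y' + (1/γ) * D y' x) :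
    f y + g y ≤ f x + g x - (1/γ) * D x y := by
  -- Bregman distance nonnegativity
  have Dnn : 0 ≤ D y x := by
    have H := grad_ineq hconv hdiffh x y
    rw [hgradh] at H
    have : (∑ i, gh x i * (y - x) i) = ∑ i, gh x i * (y i - x i) := by
      simp [Pi.sub_apply]
    rw [this] at H
    rw [hD]; linarith
  -- gradient inequality for g
  have gIneq : g y + (∑ i, gg y i * (x i - y i)) ≤ g x := by
    have H := grad_ineq hgconv hgd y x
    rw [hggrad] at H
    have : (∑ i, gg y i * (x - y) i) = ∑ i, gg y i * (x i - y i) := by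
      simp [Pi.sub_apply]
    rw [this] at H; linarith
  -- the (constant-free) subproblem objective
  set φ : (Fin n → ℝ) → ℝ := fun z =>
    (∑ i, gf x i * z i) + g z + (1/γ) * (h z - ∑ i, gh x i * z i) with hφ
  have hminφ : IsLocalMin φ y := by
    apply Filter.Eventually.of_forall
    intro z
    have H := hmin z
    rw [hD y x, hD z x] at H
    simp only [hφ, mul_sub, Finset.sum_sub_distrib] at H ⊢
    linarith
  -- derivative of φ at y
  have e1 : (fun z => ∑ i, gf x i * z i) = ⇑(linCLM n (gf x)) := by
    funext z; rw [linCLM_apply]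
  have e2 : (fun z => ∑ i, gh x i * z i) = ⇑(linCLM n (gh x)) := by
    funext z; rw [linCLM_apply]
  have hder : HasFDerivAt φ
      (linCLM n (gf x) + fderiv ℝ g y + (1/γ) • (fderiv ℝ h y - linCLM n (gh x))) y := by
    have h1 : HasFDerivAt (fun z => ∑ i, gf x i * z i) (linCLM n (gf x)) y := by
      rw [e1]; exact (linCLM n (gf x)).hasFDerivAt
    have h2 : HasFDerivAt (fun z => ∑ i, gh x i * z i) (linCLM n (gh x)) y := by
      rw [e2]; exact (linCLM n (gh x)).hasFDerivAt
    exact (h1.add (hgd y).hasFDerivAt).add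
      ((((hdiffh y).hasFDerivAt).sub h2).const_mul (1/γ))
  have h0 : (linCLM n (gf x) + fderiv ℝ g y + (1/γ) • (fderiv ℝ h y - linCLM n (gh x)))
      = 0 := by
    rw [← hder.fderiv]; exact hminφ.fderiv_eq_zero
  have hopt : ∀ q : Fin n → ℝ, (∑ i, gf x i * q i) + (∑ i, gg y i * q i)
      + (1/γ) * ((∑ i, gh y i * q i) - ∑ i, gh x i * q i) = 0 := by
    intro q
    have := congrArg (fun T : (Fin n → ℝ) →L[ℝ] ℝ => T q) h0
    simpa [ContinuousLinearMap.add_apply, ContinuousLinearMap.sub_apply,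
      ContinuousLinearMap.smul_apply, linCLM_apply, hggrad, hgradh,
      smul_eq_mul] using this
  have key := hopt (x - y)
  simp only [Pi.sub_apply] at key
  -- rewrite the Bregman-gradient combination
  have eC : (1/γ) * ((∑ i, gh y i * (x i - y i)) - ∑ i, gh x i * (x i - y i))
      = -((1/γ) * D x y) - (1/γ) * D y x := by
    have hs : (∑ i, gh x i * (y i - x i)) = -∑ i, gh x i * (x i - y i) := by
      rw [← Finset.sum_neg_distrib]; exact Finset.sum_congr rfl fun i _ => by ring
    rw [hD x y, hD y x, hs]; ring
  have hSf : (∑ i, gf x i * (y i - x i)) = -∑ i, gf x i * (x i - y i) := by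
    rw [← Finset.sum_neg_distrib]; exact Finset.sum_congr rfl fun i _ => by ring
  have hsm := hfsmooth y x
  rw [hSf] at hsm
  have hmul : L * D y x ≤ (1/γ) * D y x := mul_le_mul_of_nonneg_right hLγ Dnn
  linarith [key, eC, gIneq, hsm, hmul]

/-- **Per-cycle descent of Bregman Peaceman-Rachford splitting under relative
smoothness.**  Let `f`, `g` be convex differentiable (gradients `gf`, `gg`),
`L`-relatively smooth with respect to a Legendre function `h` (gradient `gh`,
Bregman distance `D`), let `F = f + g` and `0 < γ ≤ 1/L`.  If
`y^k = argmin_y { f(x^k) + ⟨∇f(x^k), y - x^k⟩ + g(y) + (1/γ) D(y, x^k) }` and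
`x^{k+1} = argmin_x { g(y^k) + ⟨∇g(y^k), x - y^k⟩ + f(x) + (1/γ) D(x, y^k) }`, then
`F(y^k) ≤ F(x^k) - (1/γ) D(x^k, y^k)`, `F(x^{k+1}) ≤ F(y^k) - (1/γ) D(y^k, x^{k+1})`,
and `F(x^{k+1}) ≤ F(x^k) - (1/γ) D(x^k, y^k) - (1/γ) D(y^k, x^{k+1})`. -/
theorem bprs_per_cycle_descent (n : ℕ)
    (h : (Fin n → ℝ) → ℝ) (gh : (Fin n → ℝ) → (Fin n → ℝ))
    (hconv : StrictConvexOn ℝ Set.univ h)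
    (hdiffh : Differentiable ℝ h)
    (hgradh : ∀ p q, (fderiv ℝ h p) q = ∑ i, gh p i * q i)
    (D : (Fin n → ℝ) → (Fin n → ℝ) → ℝ)
    (hD : ∀ p q, D p q = h p - h q - ∑ i, gh q i * (p i - q i))
    (f g : (Fin n → ℝ) → ℝ) (gf gg : (Fin n → ℝ) → (Fin n → ℝ))
    (hfconv : ConvexOn ℝ Set.univ f) (hgconv : ConvexOn ℝ Set.univ g)
    (hfd : Differentiable ℝ f)
    (hfgrad : ∀ p q, (fderiv ℝ f p) q = ∑ i, gf p i * q i)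
    (hgd : Differentiable ℝ g)
    (hggrad : ∀ p q, (fderiv ℝ g p) q = ∑ i, gg p i * q i)
    (L γ : ℝ) (hL : 0 < L) (hγ0 : 0 < γ) (hγL : γ ≤ 1 / L)
    (hfsmooth : ∀ a b, f a ≤ f b + (∑ i, gf b i * (a i - b i)) + L * D a b)
    (hgsmooth : ∀ a b, g a ≤ g b + (∑ i, gg b i * (a i - b i)) + L * D a b)
    (xk yk xk1 : Fin n → ℝ)
    (hyk : ∀ y', f xk + (∑ i, gf xk i * (yk i - xk i)) + g yk + (1/γ) * D yk xk
        ≤ f xk + (∑ i, gf xk i * (y' i - xk i)) + g y' + (1/γ) * D y' xk)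
    (hxk1 : ∀ x', g yk + (∑ i, gg yk i * (xk1 i - yk i)) + f xk1 + (1/γ) * D xk1 yk
        ≤ g yk + (∑ i, gg yk i * (x' i - yk i)) + f x' + (1/γ) * D x' yk) :
    (f yk + g yk ≤ f xk + g xk - (1/γ) * D xk yk)
    ∧ (f xk1 + g xk1 ≤ f yk + g yk - (1/γ) * D yk xk1)
    ∧ (f xk1 + g xk1 ≤ f xk + g xk - (1/γ) * D xk yk - (1/γ) * D yk xk1) := by
  have hLγ : L ≤ 1/γ := by
    rw [le_div_iff₀ hγ0]
    calc L * γ ≤ L * (1/L) := by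
          exact mul_le_mul_of_nonneg_left hγL hL.le
      _ = 1 := by field_simp
  have step1 := bprs_step n h gh hconv.convexOn hdiffh hgradh D hD f g gf gg
    hgconv hgd hggrad L γ hγ0 hLγ hfsmooth xk yk hyk
  have step2 := bprs_step n h gh hconv.convexOn hdiffh hgradh D hD g f gg gf
    hfconv hfd hfgrad L γ hγ0 hLγ hgsmooth yk xk1 hxk1
  exact ⟨step1, by linarith, by linarith⟩
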